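/- arXiv:2006.02761 — 2 statements merged into one kernel-verified Lean document; each statement's English description precedes it below -/
import Mathlib

section
/- Let Γ be a left A-module. Γ is finitely generated and projective if and only if there exist a right A-module Σ, an A-bilinear evaluation map ev : Γ ⊗_A Σ → A, and an A-bimodule map coev : A → Σ ⊗_A Γ such that (ev ⊗ id_Γ) ∘ (id_Γ ⊗ coev) = id_Γ and (id_Σ ⊗ ev) ∘ (coev ⊗ id_Σ) = id_Σ (under the canonical identifications Γ ≅ Γ ⊗_A A and Σ ≅ A ⊗_A Σ). -/
open scoped TensorProduct

namespace Stmt5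

section Bal

variable (A : Type*) [Ring A]
variable (S : Type*) [AddCommGroup S] [Module Aᵐᵒᵖ S]
variable (Γ : Type*) [AddCommGroup Γ] [Module A Γ]

/-- The balancing submodule defining the balanced tensor product `Σ ⊗_A Γ` of a
right `A`-module `Σ` with a left `A`-module `Γ` (realized as the usual quotient
of the tensor product of abelian groups). -/
def balRel : Submodule ℤ (S ⊗[ℤ] Γ) :=
  Submodule.span ℤ {x | ∃ (σ : S) (a : A) (s : Γ),
    x = (MulOpposite.op a • σ) ⊗ₜ[ℤ] s - σ ⊗ₜ[ℤ] (a • s)}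

/-- The balanced tensor product `Σ ⊗_A Γ`. -/
def Bal := (S ⊗[ℤ] Γ) ⧸ balRel A S Γ

noncomputable instance : AddCommGroup (Bal A S Γ) :=
  Submodule.Quotient.addCommGroup _

/-- The canonical projection onto the balanced tensor product. -/
def balMk : S ⊗[ℤ] Γ → Bal A S Γ := Submodule.Quotient.mk

end Bal

universe u

/-- The data of a right dual (in the sense of rigid monoidal categories) for a left
`A`-module `Γ`: a right `A`-module `Σ`, an `A`-bilinear evaluation pairing
`ev : Γ ⊗_A Σ → A` (left `A`-linear in the first argument and right `A`-linear in
the second) and a coevaluation element `cv = coev(1) ∈ Σ ⊗_A Γ`, written as a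
finite sum `∑ i, σᵢ ⊗ γᵢ`, satisfying the two triangle (snake) identities
`(ev ⊗ id_Γ) ∘ (id_Γ ⊗ coev) = id_Γ` and `(id_Σ ⊗ ev) ∘ (coev ⊗ id_Σ) = id_Σ`
(under the canonical identifications `Γ ≅ Γ ⊗_A A` and `Σ ≅ A ⊗_A Σ`). -/
structure RightDualData (A Γ : Type u) [Ring A] [AddCommGroup Γ] [Module A Γ] where
  S : Type u
  [addS : AddCommGroup S]
  [modS : Module Aᵐᵒᵖ S]
  ev : Γ →+ S →+ A
  ev_left : ∀ (a : A) (γ : Γ) (σ : S), ev (a • γ) σ = a * ev γ σ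
  ev_right : ∀ (a : A) (γ : Γ) (σ : S), ev γ (MulOpposite.op a • σ) = ev γ σ * a
  n : ℕ
  σv : Fin n → S
  γv : Fin n → Γ
  cv : Bal A S Γ
  cv_eq : cv = ∑ i, balMk A S Γ (σv i ⊗ₜ[ℤ] γv i)
  triangle₁ : ∀ γ : Γ, ∑ i, ev γ (σv i) • γv i = γ
  triangle₂ : ∀ σ : S, ∑ i, MulOpposite.op (ev (γv i) σ) • σv i = σ

/-- A left `A`-module `Γ` is finitely generated and projective if and only if it is
right rigid, i.e. admits a right dual `Σ` with evaluation `ev : Γ ⊗_A Σ → A` and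
coevaluation `coev : A → Σ ⊗_A Γ` satisfying the triangle identities. -/
theorem finite_projective_iff_rigid {k : Type*} {A Γ : Type u}
    [CommRing k] [Ring A] [Algebra k A] [AddCommGroup Γ] [Module A Γ] :
    (Module.Finite A Γ ∧ Module.Projective A Γ) ↔ Nonempty (RightDualData A Γ) := by
  constructor
  · rintro ⟨hfin, hproj⟩
    obtain ⟨n, π, hπ⟩ := Module.Finite.exists_fin' A Γ
    obtain ⟨s, hs⟩ := Module.projective_lifting_property π LinearMap.id hπ
    -- evaluation
    set ev : Γ →+ (Γ →ₗ[A] A) →+ A :=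
      { toFun := fun γ =>
          { toFun := fun f => f γ
            map_zero' := rfl
            map_add' := fun f g => rfl }
        map_zero' := by ext f; simp
        map_add' := fun γ γ' => by ext f; simp } with hev
    set σv : Fin n → (Γ →ₗ[A] A) := fun i => (LinearMap.proj i).comp s with hσv
    set γv : Fin n → Γ := fun i => π (Pi.single i 1) with hγv
    have key : ∀ γ : Γ, ∑ i, (s γ i) • γv i = γ := by
      intro γ
      have h1 : (∑ i, (s γ i) • Pi.single (M := fun _ : Fin n => A) i 1) = s γ := by
        ext j
        simp [Finset.sum_apply, Pi.single_apply]
      calc ∑ i, (s γ i) • γv i = π (∑ i, (s γ i) • (Pi.single i 1 : Fin n → A)) := by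
            simp [hγv, map_sum]
        _ = π (s γ) := by rw [h1]
        _ = γ := by
            have := congrArg (fun f => f γ) hs
            simpa using this
    refine ⟨⟨Γ →ₗ[A] A, ev, ?_, ?_, n, σv, γv,
      ∑ i, balMk A (Γ →ₗ[A] A) Γ (σv i ⊗ₜ[ℤ] γv i), rfl, ?_, ?_⟩⟩
    · intro a γ σ; simp [hev]
    · intro a γ σ; simp [hev, MulOpposite.smul_eq_mul_unop]
    · intro γ; exact key γ
    · intro σ
      ext γ
      have : σ (∑ i, (s γ i) • γv i) = σ γ := by rw [key γ]
      simpa [hev, hσv, MulOpposite.smul_eq_mul_unop, map_sum, map_smul,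
        smul_eq_mul, Finset.sum_apply] using this
  · rintro ⟨d⟩
    letI := d.addS
    letI := d.modS
    -- dual basis maps
    set f : Fin d.n → (Γ →ₗ[A] A) := fun i =>
      { toFun := fun γ => d.ev γ (d.σv i)
        map_add' := fun γ γ' => by simp
        map_smul' := fun a γ => d.ev_left a γ (d.σv i) } with hf
    set s : Γ →ₗ[A] (Fin d.n → A) :=
      { toFun := fun γ i => f i γ
        map_add' := fun γ γ' => by ext i; simp
        map_smul' := fun a γ => by ext i; simp } with hsdef
    set π : (Fin d.n → A) →ₗ[A] Γ :=
      { toFun := fun c => ∑ i, c i • d.γv i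
        map_add' := fun c c' => by simp [add_smul, Finset.sum_add_distrib]
        map_smul' := fun a c => by simp [mul_smul, Finset.smul_sum] }
      with hπdef
    have hcomp : π.comp s = LinearMap.id := by
      ext γ
      simpa [hπdef, hsdef, hf] using d.triangle₁ γ
    have hsurj : Function.Surjective π := by
      intro γ
      exact ⟨s γ, by simpa using congrArg (fun g => g γ) hcomp⟩
    exact ⟨Module.Finite.of_surjective π hsurj, Module.Projective.of_split s π hcomp⟩

end Stmt5
end

section
/- Let H be a quasitriangular Hopf algebra with R-matrix R and let A be a left H-module algebra that is braided commutative: ab = (R̄ᵅ ▷ b)(R̄_α ▷ a) for all a,b ∈ A. Then every braided derivation u of A (i.e., k-linear u : A → A with u(ab) = u(a)b + (R̄ᵅ ▷ a)((R̄_α ▷ u)(b)), where ▷ on u is the adjoint action) satisfies, for any a ∈ A, that the map a·u defined by (a·u)(b) = a·u(b) is again a braided derivation. -/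
open scoped TensorProduct

set_option linter.unusedSectionVars false
set_option linter.unusedVariables false
set_option maxHeartbeats 1000000

namespace Stmt11

variable {k H A : Type*} [CommRing k] [Ring H] [HopfAlgebra k H]
  [Ring A] [Algebra k A] [Module H A] [IsScalarTower k H A] [SMulCommClass k H A]

private theorem exists_fin' {R M N : Type*} [CommSemiring R] [AddCommMonoid M] [AddCommMonoid N]
    [Module R M] [Module R N] (x : M ⊗[R] N) :
    ∃ (n : ℕ) (f : Fin n → M) (g : Fin n → N), x = ∑ i, f i ⊗ₜ[R] g i := by
  obtain ⟨s, hs⟩ := TensorProduct.exists_finset x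
  refine ⟨s.card, fun i => ((s.equivFin.symm i : M × N)).1,
    fun i => ((s.equivFin.symm i : M × N)).2, ?_⟩
  rw [hs, ← Finset.sum_coe_sort s (fun p => p.1 ⊗ₜ[R] p.2),
    ← Equiv.sum_comp s.equivFin.symm (fun p : s => (p : M × N).1 ⊗ₜ[R] (p : M × N).2)]

/-- `z ⊗ w ↦ z • L (S w • c)` -/
private noncomputable def bet (L : A →ₗ[k] A) (c : A) : H ⊗[k] H →ₗ[k] A :=
  TensorProduct.lift <| LinearMap.mk₂ k
    (fun z w => z • L ((HopfAlgebra.antipode (R := k) w) • c))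
    (fun z z' w => by rw [add_smul])
    (fun rr z w => by rw [smul_assoc])
    (fun z w w' => by rw [(HopfAlgebra.antipode (R := k)).map_add, add_smul, L.map_add, smul_add])
    (fun rr z w => by rw [(HopfAlgebra.antipode (R := k)).map_smul, smul_assoc, L.map_smul, smul_comm])

@[simp] private theorem bet_tmul (L : A →ₗ[k] A) (c : A) (z w : H) :
    bet L c (z ⊗ₜ[k] w) = z • L ((HopfAlgebra.antipode (R := k) w) • c) := rfl

/-- `x ⊗ v ↦ (x • μ) * Φ v` -/
private noncomputable def sm (μ : A) {V : Type*} [AddCommMonoid V] [Module k V]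
    (Φ : V →ₗ[k] A) : H ⊗[k] V →ₗ[k] A :=
  TensorProduct.lift <| LinearMap.mk₂ k (fun x v => (x • μ) * Φ v)
    (fun x x' v => by rw [add_smul, add_mul])
    (fun rr x v => by rw [smul_assoc, smul_mul_assoc])
    (fun x v v' => by rw [map_add, mul_add])
    (fun rr x v => by rw [map_smul, mul_smul_comm])

@[simp] private theorem sm_tmul (μ : A) {V : Type*} [AddCommMonoid V] [Module k V]
    (Φ : V →ₗ[k] A) (x : H) (v : V) : sm μ Φ (x ⊗ₜ[k] v) = (x • μ) * Φ v := rfl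

private theorem keyE {ι ι' : Type} [Fintype ι] [Fintype ι'] (r r' : ι → H) (rb rb' : ι' → H)
    (hinv₁ : (∑ i, r i ⊗ₜ[k] r' i) * (∑ j, rb j ⊗ₜ[k] rb' j) = 1)
    (hinv₂ : (∑ j, rb j ⊗ₜ[k] rb' j) * (∑ i, r i ⊗ₜ[k] r' i) = 1)
    (hhex₂ : ∑ i, (r i) ⊗ₜ[k] (Coalgebra.comul (R := k) (r' i))
      = ∑ i, ∑ j, (r i * r j) ⊗ₜ[k] (r' j ⊗ₜ[k] r' i)) :
    ∑ j, (rb j) ⊗ₜ[k] (Coalgebra.comul (R := k) (rb' j))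
      = ∑ i, ∑ j, (rb i * rb j) ⊗ₜ[k] (rb' i ⊗ₜ[k] rb' j) := by
  set Rm : H ⊗[k] H := ∑ i, r i ⊗ₜ[k] r' i with hRm
  set T : H ⊗[k] H := ∑ j, rb j ⊗ₜ[k] rb' j with hT
  set Dm : H ⊗[k] H →ₐ[k] H ⊗[k] (H ⊗[k] H) :=
    Algebra.TensorProduct.map (AlgHom.id k H) (Bialgebra.comulAlgHom k H) with hDmdef
  set i12 : H ⊗[k] H →ₐ[k] H ⊗[k] (H ⊗[k] H) :=
    Algebra.TensorProduct.map (AlgHom.id k H) Algebra.TensorProduct.includeLeft with hi12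
  set i13 : H ⊗[k] H →ₐ[k] H ⊗[k] (H ⊗[k] H) :=
    Algebra.TensorProduct.map (AlgHom.id k H) Algebra.TensorProduct.includeRight with hi13
  have hDT : Dm T = ∑ j, (rb j) ⊗ₜ[k] (Coalgebra.comul (R := k) (rb' j)) := by
    rw [hT, map_sum]
    simp [hDmdef]
  have hDR : Dm Rm = i13 Rm * i12 Rm := by
    rw [hRm, map_sum]
    simp only [hDmdef, Algebra.TensorProduct.map_tmul, AlgHom.coe_id, id_eq,
      Bialgebra.comulAlgHom_apply]
    rw [hhex₂]
    simp only [hi12, hi13, map_sum, Algebra.TensorProduct.map_tmul, AlgHom.coe_id, id_eq,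
      Algebra.TensorProduct.includeLeft_apply, Algebra.TensorProduct.includeRight_apply,
      Finset.sum_mul_sum, Algebra.TensorProduct.tmul_mul_tmul, one_mul, mul_one]
  have h12T : i12 T * i13 T = ∑ i, ∑ j, (rb i * rb j) ⊗ₜ[k] (rb' i ⊗ₜ[k] rb' j) := by
    rw [hT]
    simp only [hi12, hi13, map_sum, Algebra.TensorProduct.map_tmul, AlgHom.coe_id, id_eq,
      Algebra.TensorProduct.includeLeft_apply, Algebra.TensorProduct.includeRight_apply,
      Finset.sum_mul_sum, Algebra.TensorProduct.tmul_mul_tmul, one_mul, mul_one]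
  have h1 : Dm T * Dm Rm = 1 := by rw [← map_mul, hinv₂, map_one]
  have h2 : Dm Rm * (i12 T * i13 T) = 1 := by
    rw [hDR, mul_assoc, ← mul_assoc (i12 Rm), ← map_mul, hinv₁, map_one, one_mul,
      ← map_mul, hinv₁, map_one]
  rw [← hDT, ← h12T]
  exact left_inv_eq_right_inv h1 h2

variable {ι' : Type} [Fintype ι']

/-- `u` is a braided derivation of `A`:
`u(ab) = u(a)b + (R̄ᵅ ▷ a)·((R̄_α ▷ u)(b))`, where `R⁻¹ = ∑ i, rb i ⊗ rb' i`
and `act` is the Hopf adjoint action on `End_k(A)`. -/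
def IsBraidedDer (rb rb' : ι' → H) (act : H → (A →ₗ[k] A) → (A →ₗ[k] A))
    (u : A →ₗ[k] A) : Prop :=
  ∀ a b : A, u (a * b) = u a * b + ∑ i, (rb i • a) * (act (rb' i) u) b

/-- Let `H` be a quasitriangular Hopf algebra with `R`-matrix
`R = ∑ i, r i ⊗ r' i`, `R⁻¹ = ∑ i, rb i ⊗ rb' i`, and let `A` be a left
`H`-module algebra which is braided commutative: `ab = (R̄ᵅ ▷ b)(R̄_α ▷ a)`.
Then for every braided derivation `u` of `A` and every `a ∈ A`, the map
`a·u : b ↦ a·u(b)` is again a braided derivation. -/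
theorem braided_derivation_module
    {ι : Type} [Fintype ι] (r r' : ι → H) (rb rb' : ι' → H)
    (hinv₁ : (∑ i, r i ⊗ₜ[k] r' i) * (∑ j, rb j ⊗ₜ[k] rb' j) = 1)
    (hinv₂ : (∑ j, rb j ⊗ₜ[k] rb' j) * (∑ i, r i ⊗ₜ[k] r' i) = 1)
    (hqcc : ∀ (h : H) (n : ℕ) (h₁ h₂ : Fin n → H),
      Coalgebra.comul (R := k) h = ∑ l, h₁ l ⊗ₜ[k] h₂ l →
      ∑ l, ∑ i, (h₂ l * r i) ⊗ₜ[k] (h₁ l * r' i)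
        = ∑ i, ∑ l, (r i * h₁ l) ⊗ₜ[k] (r' i * h₂ l))
    (hhex₁ : ∑ i, (Coalgebra.comul (R := k) (r i)) ⊗ₜ[k] (r' i)
      = ∑ i, ∑ j, (r i ⊗ₜ[k] r j) ⊗ₜ[k] (r' i * r' j))
    (hhex₂ : ∑ i, (r i) ⊗ₜ[k] (Coalgebra.comul (R := k) (r' i))
      = ∑ i, ∑ j, (r i * r j) ⊗ₜ[k] (r' j ⊗ₜ[k] r' i))
    -- `A` is a left `H`-module algebra
    (hma : ∀ (h : H) (a b : A) (n : ℕ) (h₁ h₂ : Fin n → H),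
      Coalgebra.comul (R := k) h = ∑ i, h₁ i ⊗ₜ[k] h₂ i →
      h • (a * b) = ∑ i, (h₁ i • a) * (h₂ i • b))
    (hmu : ∀ h : H, h • (1 : A) = algebraMap k A (Coalgebra.counit (R := k) h))
    -- `A` is braided commutative
    (hbc : ∀ a b : A, a * b = ∑ i, (rb i • b) * (rb' i • a))
    -- the Hopf adjoint action on `End_k(A)`
    (act : H → (A →ₗ[k] A) → (A →ₗ[k] A))
    (hact : ∀ (h : H) (L : A →ₗ[k] A) (a : A) (n : ℕ) (h₁ h₂ : Fin n → H),
      Coalgebra.comul (R := k) h = ∑ i, h₁ i ⊗ₜ[k] h₂ i →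
      act h L a = ∑ i, h₁ i • L (HopfAlgebra.antipode (R := k) (h₂ i) • a))
    -- the claim
    (u : A →ₗ[k] A) (hu : IsBraidedDer rb rb' act u) (a : A) :
    IsBraidedDer rb rb' act (LinearMap.mulLeft k a ∘ₗ u) := by
  classical
  intro b c
  have hbet : ∀ (h : H) (L : A →ₗ[k] A), act h L c = bet L c (Coalgebra.comul (R := k) h) := by
    intro h L
    obtain ⟨n, f, g, hrep⟩ := exists_fin' (Coalgebra.comul (R := k) h)
    rw [hact h L c n f g hrep, hrep, map_sum]
    simp only [bet_tmul]
  have F2 : ∀ h : H, act h (LinearMap.mulLeft k a ∘ₗ u) c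
      = sm a (bet u c) ((Coalgebra.comul (R := k)).lTensor H (Coalgebra.comul (R := k) h)) := by
    intro h
    rw [hbet h, ← Coalgebra.coassoc_apply (R := k) (A := H) h]
    obtain ⟨n, f, g, hrep⟩ := exists_fin' (Coalgebra.comul (R := k) h)
    rw [hrep]
    simp only [map_sum]
    refine Finset.sum_congr rfl fun i _ => ?_
    obtain ⟨m, p, q, hpq⟩ := exists_fin' (Coalgebra.comul (R := k) (f i))
    rw [bet_tmul]
    simp only [LinearMap.coe_comp, Function.comp_apply, LinearMap.mulLeft_apply]
    rw [hma (f i) a (u ((HopfAlgebra.antipode (R := k) (g i)) • c)) m p q hpq,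
      LinearMap.rTensor_tmul, hpq, TensorProduct.sum_tmul]
    simp only [map_sum, TensorProduct.assoc_tmul, sm_tmul, bet_tmul]
  simp only [LinearMap.coe_comp, Function.comp_apply, LinearMap.mulLeft_apply]
  rw [hu b c, mul_add, ← mul_assoc]
  congr 1
  calc a * ∑ j, (rb j • b) * (act (rb' j) u) c
      = ∑ j, ∑ i, ((rb i * rb j) • b) * ((rb' i • a) * (act (rb' j) u) c) := by
        rw [Finset.mul_sum]
        refine Finset.sum_congr rfl fun j _ => ?_
        rw [← mul_assoc, hbc a (rb j • b), Finset.sum_mul]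
        refine Finset.sum_congr rfl fun i _ => ?_
        rw [smul_smul, mul_assoc]
    _ = ∑ i, ∑ j, ((rb i * rb j) • b)
          * ((rb' i • a) * (bet u c (Coalgebra.comul (R := k) (rb' j)))) := by
        rw [Finset.sum_comm]
        simp_rw [hbet]
    _ = ∑ j, (rb j • b) * (act (rb' j) (LinearMap.mulLeft k a ∘ₗ u)) c := by
        have key := keyE r r' rb rb' hinv₁ hinv₂ hhex₂
        have happ := congrArg (fun z : H ⊗[k] (H ⊗[k] H) =>
          sm b (sm a (bet u c))
            ((TensorProduct.map LinearMap.id ((Coalgebra.comul (R := k)).lTensor H)) z)) key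
        simp only [map_sum, TensorProduct.map_tmul, LinearMap.id_coe, id_eq,
          LinearMap.lTensor_tmul, sm_tmul] at happ
        rw [← happ]
        refine Finset.sum_congr rfl fun j _ => ?_
        rw [F2 (rb' j)]

end Stmt11
end
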